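/- Let Λ be a countable index set, (κ_λ)_{λ∈Λ} ∈ (0,∞)^Λ with sup_λ κ_λ < ∞, and let (φ_α)_{α>0} be a non-linear regularizing filter satisfying Assumption B. Fix α > 0 and let z, z^k ∈ ℓ²(Λ) with ‖z^k − z‖_{ℓ²} → 0 as k → ∞. Then the elements x^k := (φ_α(κ_λ, z^k_λ)/κ_λ)_λ and x := (φ_α(κ_λ, z_λ)/κ_λ)_λ lie in ℓ²(Λ) and x^k converges weakly to x in ℓ²(Λ), i.e. ⟨x^k, w⟩ → ⟨x, w⟩ for every w ∈ ℓ²(Λ). -/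

import Mathlib

open scoped ENNReal RealInnerProductSpace
open Filter

noncomputable section

/-- A non-linear regularizing filter: `φ α κ` is (F1) monotone, (F2) nonexpansive,
(F3) zero at zero, and (F4) converges pointwise to the identity as `α → 0`. -/
def IsRegFilter (φ : ℝ → ℝ → ℝ → ℝ) : Prop :=
  (∀ α > (0 : ℝ), ∀ κ > (0 : ℝ), Monotone (φ α κ)) ∧
  (∀ α > (0 : ℝ), ∀ κ > (0 : ℝ), ∀ x y : ℝ, |φ α κ x - φ α κ y| ≤ |x - y|) ∧
  (∀ α > (0 : ℝ), ∀ κ > (0 : ℝ), φ α κ 0 = 0) ∧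
  (∀ κ > (0 : ℝ), ∀ c : ℝ,
    Tendsto (fun α => φ α κ c) (nhdsWithin 0 (Set.Ioi 0)) (nhds c))

/-- Assumption B: (B1) `α ↦ |φ_α(κ,x)|` increases as `α` decreases, and (B2) there are
`d, e > 0` with `|φ_α(κ,x)| ≤ (eκ/√α)·|x|` whenever `|x| ≤ dα/κ`. -/
def AssumptionB (φ : ℝ → ℝ → ℝ → ℝ) : Prop :=
  (∀ κ > (0 : ℝ), ∀ x : ℝ, ∀ α β : ℝ, 0 < α → α ≤ β → |φ β κ x| ≤ |φ α κ x|) ∧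
  (∃ d > (0 : ℝ), ∃ e > (0 : ℝ), ∀ κ > (0 : ℝ), ∀ α > (0 : ℝ), ∀ x : ℝ,
    |x| ≤ d * α / κ → |φ α κ x| ≤ e * κ / Real.sqrt α * |x|)

set_option maxHeartbeats 1000000

lemma l2_mem_of_le {Λ : Type*} (v : lp (fun _ : Λ => ℝ) 2) (C : ℝ) (f : Λ → ℝ)
    (hf : ∀ l, |f l| ≤ C * |v l|) : Memℓp f 2 := by
  apply memℓp_gen
  have h2 : ((2:ℝ≥0∞)).toReal = 2 := by norm_num
  have hv : Summable (fun l => ‖v l‖ ^ (2:ℝ≥0∞).toReal) := (lp.memℓp v).summable (by norm_num)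
  refine Summable.of_nonneg_of_le (fun l => ?_) (fun l => ?_) (hv.mul_left (C^2))
  · positivity
  · rw [h2, show (2:ℝ) = ((2:ℕ):ℝ) by norm_num, Real.rpow_natCast, Real.rpow_natCast]
    calc ‖f l‖^2 ≤ (C * |v l|)^2 := by
          apply pow_le_pow_left₀ (norm_nonneg _) (by simpa using hf l)
      _ = C^2 * ‖v l‖^2 := by rw [mul_pow]; simp [Real.norm_eq_abs]

lemma l2_norm_le_of_le {Λ : Type*} (v : lp (fun _ : Λ => ℝ) 2) (C : ℝ) (hC : 0 ≤ C)
    (f : lp (fun _ : Λ => ℝ) 2) (hf : ∀ l, |f l| ≤ C * |v l|) : ‖f‖ ≤ C * ‖v‖ := by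
  have hp : 0 < (2:ℝ≥0∞).toReal := by norm_num
  apply lp.norm_le_of_tsum_le hp (by positivity)
  have hv : Summable (fun l => ‖v l‖ ^ (2:ℝ≥0∞).toReal) := (lp.memℓp v).summable hp
  have hfs : Summable (fun l => ‖f l‖ ^ (2:ℝ≥0∞).toReal) := (lp.memℓp f).summable hp
  have hb : ∀ l, ‖f l‖ ^ (2:ℝ≥0∞).toReal ≤ C ^ (2:ℝ≥0∞).toReal * ‖v l‖ ^ (2:ℝ≥0∞).toReal := by
    intro l
    rw [← Real.mul_rpow hC (norm_nonneg _)]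
    exact Real.rpow_le_rpow (norm_nonneg _) (by simpa using hf l) hp.le
  calc ∑' l, ‖f l‖ ^ (2:ℝ≥0∞).toReal
      ≤ ∑' l, C ^ (2:ℝ≥0∞).toReal * ‖v l‖ ^ (2:ℝ≥0∞).toReal :=
        Summable.tsum_le_tsum hb hfs (hv.mul_left _)
    _ = C ^ (2:ℝ≥0∞).toReal * ∑' l, ‖v l‖ ^ (2:ℝ≥0∞).toReal := tsum_mul_left
    _ = (C * ‖v‖) ^ (2:ℝ≥0∞).toReal := by
        rw [← lp.norm_rpow_eq_tsum hp, Real.mul_rpow hC (norm_nonneg _)]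


/-- **Stability.** For a fixed `α > 0` and a non-linear regularizing filter
satisfying Assumption B, if `z^k → z` in `ℓ²(Λ)` then the filtered reconstructions
`(φ_α(κ_λ, z^k_λ)/κ_λ)_λ` lie in `ℓ²(Λ)` and converge weakly to `(φ_α(κ_λ, z_λ)/κ_λ)_λ`. -/
theorem statement8 {Λ : Type*} [Countable Λ]
    (κ : Λ → ℝ) (hκ : ∀ l, 0 < κ l) (hκbd : BddAbove (Set.range κ))
    (φ : ℝ → ℝ → ℝ → ℝ) (hfilter : IsRegFilter φ) (hB : AssumptionB φ)
    (α : ℝ) (hα : 0 < α)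
    (z : lp (fun _ : Λ => ℝ) 2) (zk : ℕ → lp (fun _ : Λ => ℝ) 2)
    (hconv : Tendsto (fun k => ‖zk k - z‖) atTop (nhds 0)) :
    ∃ (hx : Memℓp (fun l => φ α (κ l) (z l) / κ l) 2)
      (hxk : ∀ k, Memℓp (fun l => φ α (κ l) (zk k l) / κ l) 2),
      ∀ w : lp (fun _ : Λ => ℝ) 2,
        Tendsto
          (fun k => ⟪(⟨fun l => φ α (κ l) (zk k l) / κ l, hxk k⟩ : lp (fun _ : Λ => ℝ) 2), w⟫)
          atTop
          (nhds ⟪(⟨fun l => φ α (κ l) (z l) / κ l, hx⟩ : lp (fun _ : Λ => ℝ) 2), w⟫) := by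
  classical
  obtain ⟨_, hne, hzero, _⟩ := hfilter
  obtain ⟨_, d, hd, e, he, hB2⟩ := hB
  have hsα : 0 < Real.sqrt α := Real.sqrt_pos.2 hα
  -- pointwise key bound
  have key : ∀ (l : Λ) (a : ℝ), |φ α (κ l) a / κ l| ≤ e / Real.sqrt α * |a| + a^2 / (d*α) := by
    intro l a
    have hκl := hκ l
    rw [abs_div, abs_of_pos hκl]
    rcases le_or_gt |a| (d*α/κ l) with h | h
    · have h1 := hB2 (κ l) hκl α hα a h
      have h2 : |φ α (κ l) a| / κ l ≤ e * κ l / Real.sqrt α * |a| / κ l := by gcongr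
      have h3 : e * κ l / Real.sqrt α * |a| / κ l = e / Real.sqrt α * |a| := by
        field_simp
      rw [h3] at h2
      have h5 : 0 ≤ a^2 / (d*α) := by positivity
      linarith
    · have habs : |φ α (κ l) a| ≤ |a| := by simpa [hzero α hα (κ l) hκl] using hne α hα (κ l) hκl a 0
      have h2 : |φ α (κ l) a| / κ l ≤ |a| / κ l := by gcongr
      have h3 : |a| / κ l ≤ a^2 / (d*α) := by
        rw [div_le_div_iff₀ hκl (by positivity)]
        have h5 : d * α < |a| * κ l := by
          rw [div_lt_iff₀ hκl] at h; linarith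
        have h6 : |a| * (d * α) ≤ |a| * (|a| * κ l) :=
          mul_le_mul_of_nonneg_left h5.le (abs_nonneg a)
        have h7 : |a| * (|a| * κ l) = a^2 * κ l := by rw [← sq_abs]; ring
        linarith
      have h4 : 0 ≤ e / Real.sqrt α * |a| := by positivity
      linarith
  -- coordinate bound in terms of the norm
  have hbound : ∀ (v : lp (fun _ : Λ => ℝ) 2) (l : Λ),
      |φ α (κ l) (v l) / κ l| ≤ (e / Real.sqrt α + ‖v‖/(d*α)) * |v l| := by
    intro v l
    refine (key l (v l)).trans ?_
    have h1 : |v l| ≤ ‖v‖ := by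
      simpa [Real.norm_eq_abs] using lp.norm_apply_le_norm (by norm_num) v l
    have h2 : (v l)^2 ≤ ‖v‖ * |v l| := by nlinarith [abs_nonneg (v l), sq_abs (v l)]
    have h3 : (v l)^2 / (d*α) ≤ ‖v‖ * |v l| / (d*α) := by gcongr
    have h4 : (e / Real.sqrt α + ‖v‖/(d*α)) * |v l| =
        e / Real.sqrt α * |v l| + ‖v‖ * |v l| / (d*α) := by ring
    rw [h4]
    linarith
  have hx : Memℓp (fun l => φ α (κ l) (z l) / κ l) 2 :=
    l2_mem_of_le z _ _ (hbound z)
  have hxk : ∀ k, Memℓp (fun l => φ α (κ l) (zk k l) / κ l) 2 :=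
    fun k => l2_mem_of_le (zk k) _ _ (hbound (zk k))
  refine ⟨hx, hxk, ?_⟩
  intro w
  set x0 : lp (fun _ : Λ => ℝ) 2 := ⟨fun l => φ α (κ l) (z l) / κ l, hx⟩ with hx0def
  set X : ℕ → lp (fun _ : Λ => ℝ) 2 := fun k => ⟨fun l => φ α (κ l) (zk k l) / κ l, hxk k⟩
  -- uniform bound on ‖X k - x0‖
  obtain ⟨B, hBub⟩ := hconv.bddAbove_range
  have hBk : ∀ k, ‖zk k - z‖ ≤ B := fun k => hBub (Set.mem_range_self k)
  set R : ℝ := B + ‖z‖ with hRdef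
  have hRk : ∀ k, ‖zk k‖ ≤ R := by
    intro k
    calc ‖zk k‖ = ‖zk k - z + z‖ := by rw [sub_add_cancel]
      _ ≤ ‖zk k - z‖ + ‖z‖ := norm_add_le _ _
      _ ≤ B + ‖z‖ := by gcongr; exact hBk k
  have hR0 : 0 ≤ R := (norm_nonneg (zk 0)).trans (hRk 0)
  set M : ℝ := (e / Real.sqrt α + R/(d*α)) * R + ‖x0‖ with hMdef
  have hM0 : 0 ≤ M := by positivity
  have hMk : ∀ k, ‖X k - x0‖ ≤ M := by
    intro k
    have h1 : ‖X k‖ ≤ (e / Real.sqrt α + ‖zk k‖/(d*α)) * ‖zk k‖ :=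
      l2_norm_le_of_le (zk k) _ (by positivity) (X k) (hbound (zk k))
    have h2 : (e / Real.sqrt α + ‖zk k‖/(d*α)) * ‖zk k‖ ≤ (e / Real.sqrt α + R/(d*α)) * R := by
      have h21 : e / Real.sqrt α + ‖zk k‖/(d*α) ≤ e / Real.sqrt α + R/(d*α) := by
        have : ‖zk k‖/(d*α) ≤ R/(d*α) := div_le_div_of_nonneg_right (hRk k) (by positivity)
        linarith
      exact mul_le_mul h21 (hRk k) (norm_nonneg _) (by positivity)
    calc ‖X k - x0‖ ≤ ‖X k‖ + ‖x0‖ := norm_sub_le _ _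
      _ ≤ M := by rw [hMdef]; linarith
  -- coordinatewise convergence
  have hcoord : ∀ l : Λ, Tendsto (fun k => (X k - x0) l) atTop (nhds 0) := by
    intro l
    refine squeeze_zero_norm (a := fun k => ‖zk k - z‖ / κ l) (fun k => ?_) ?_
    · have h1 : (X k - x0) l = (φ α (κ l) (zk k l) - φ α (κ l) (z l)) / κ l := by
        simp [X, x0, sub_div]; rfl
      rw [h1, Real.norm_eq_abs, abs_div, abs_of_pos (hκ l)]
      have h2 : |φ α (κ l) (zk k l) - φ α (κ l) (z l)| ≤ |zk k l - z l| :=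
        hne α hα (κ l) (hκ l) _ _
      have h3 : |zk k l - z l| ≤ ‖zk k - z‖ := by
        have := lp.norm_apply_le_norm (E := fun _ : Λ => ℝ) (p := 2) (by norm_num) (zk k - z) l
        simpa [Real.norm_eq_abs] using this
      exact div_le_div_of_nonneg_right (h2.trans h3) (hκ l).le
    · simpa using hconv.div_const (κ l)
  -- reduce to inner products with X k - x0
  have hgoal : Tendsto (fun k => ⟪X k - x0, w⟫) atTop (nhds 0) := by
    rw [Metric.tendsto_atTop]
    intro ε hε
    set ε' : ℝ := ε / (2 * (M + 1)) with hε'def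
    have hε' : 0 < ε' := by positivity
    obtain ⟨s, hs⟩ :=
      ((lp.hasSum_single (p := 2) (by norm_num) w).eventually
        (Metric.ball_mem_nhds w hε')).exists
    set ws : lp (fun _ : Λ => ℝ) 2 := ∑ i ∈ s, lp.single 2 i (w i) with hwsdef
    have hws : ‖w - ws‖ < ε' := by
      rw [norm_sub_rev]
      simpa [ws, dist_eq_norm] using hs
    have hinner : ∀ g : lp (fun _ : Λ => ℝ) 2, ⟪g, ws⟫ = ∑ i ∈ s, g i * w i := by
      intro g
      rw [hwsdef, inner_sum]
      exact Finset.sum_congr rfl fun i _ => by rw [lp.inner_single_right]; exact Real.inner_apply _ _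
    have hfin : Tendsto (fun k => ⟪X k - x0, ws⟫) atTop (nhds 0) := by
      simp only [hinner]
      have : Tendsto (fun k => ∑ i ∈ s, (X k - x0) i * w i) atTop
          (nhds (∑ i ∈ s, (0:ℝ) * w i)) :=
        tendsto_finset_sum s fun i _ => (hcoord i).mul_const (w i)
      simpa using this
    rw [Metric.tendsto_atTop] at hfin
    obtain ⟨N, hN⟩ := hfin (ε/2) (by positivity)
    refine ⟨N, fun k hk => ?_⟩
    have h1 : |⟪X k - x0, ws⟫| < ε/2 := by
      simpa [Real.dist_eq] using hN k hk
    have h2 : |⟪X k - x0, w - ws⟫| ≤ M * ε' := by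
      calc |⟪X k - x0, w - ws⟫| ≤ ‖X k - x0‖ * ‖w - ws‖ := abs_real_inner_le_norm _ _
        _ ≤ M * ε' := by
            apply mul_le_mul (hMk k) hws.le (norm_nonneg _) hM0
    have h3 : M * ε' ≤ ε / 2 := by
      have hM1 : M + 1 ≠ 0 := by positivity
      have h31 : M * ε' ≤ (M + 1) * ε' := by gcongr; linarith
      have h32 : (M + 1) * ε' = ε / 2 := by rw [hε'def]; field_simp
      linarith
    have h4 : ⟪X k - x0, w⟫ = ⟪X k - x0, ws⟫ + ⟪X k - x0, w - ws⟫ := by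
      rw [← inner_add_right]; congr 1; abel
    rw [Real.dist_eq, sub_zero, h4]
    calc |⟪X k - x0, ws⟫ + ⟪X k - x0, w - ws⟫| ≤ |⟪X k - x0, ws⟫| + |⟪X k - x0, w - ws⟫| :=
          abs_add_le _ _
      _ < ε/2 + ε/2 := by have := h2.trans h3; linarith
      _ = ε := by ring
  have heq : ∀ k, ⟪X k, w⟫ = ⟪X k - x0, w⟫ + ⟪x0, w⟫ := by
    intro k; rw [inner_sub_left]; ring
  show Tendsto (fun k => ⟪X k, w⟫) atTop (nhds ⟪x0, w⟫)
  simp only [heq]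
  simpa using hgoal.add_const ⟪x0, w⟫
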